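/- Assume μ ≥ α(1) and μ > r, and let w = w_{b*} be the solution of r w = (μ - α((1-x)^+))w' + (σ²/2)w'' on [0,b*] with w(0)=0, w'(b*)=1, w''(b*)=0 and b* > 1. Then w is concave on [0, b*]. -/

import Mathlib

open Set


lemma push_up (f : ℝ → ℝ) (hf1 : Differentiable ℝ f) (hf2 : Differentiable ℝ (deriv f))
    (hc : Continuous (deriv (deriv f))) {x δ : ℝ} (hδ : 0 < δ)
    (h0 : deriv f x = 0) (h2 : 0 < deriv (deriv f) x) :
    ∃ y ∈ Ioo (x - δ) x, f x < f y := by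
  have hev : ∀ᶠ y in nhds x, 0 < deriv (deriv f) y :=
    hc.continuousAt.eventually_mem (isOpen_Ioi.mem_nhds h2)
  obtain ⟨ε, hε, hball⟩ := Metric.eventually_nhds_iff.mp hev
  set c := min ε δ with hc'
  have hcpos : 0 < c := lt_min hε hδ
  have hmono : StrictMonoOn (deriv f) (Icc (x - c/2) x) := by
    apply strictMonoOn_of_deriv_pos (convex_Icc _ _) hf2.continuous.continuousOn
    intro z hz
    rw [interior_Icc] at hz
    apply hball
    rw [Real.dist_eq, abs_lt]
    constructor <;> [skip; skip] <;>
      nlinarith [hz.1, hz.2, min_le_left ε δ, min_le_right ε δ]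
  have hanti : StrictAntiOn f (Icc (x - c/2) x) := by
    apply strictAntiOn_of_deriv_neg (convex_Icc _ _) hf1.continuous.continuousOn
    intro z hz
    rw [interior_Icc] at hz
    have := hmono ⟨le_of_lt hz.1, le_of_lt hz.2⟩ ⟨by linarith, le_rfl⟩ hz.2
    rw [h0] at this
    exact this
  refine ⟨x - c/2, ⟨by nlinarith [min_le_right ε δ], by linarith⟩, ?_⟩
  exact hanti ⟨le_rfl, by linarith⟩ ⟨by linarith, le_rfl⟩ (by linarith)

lemma push_down (f : ℝ → ℝ) (hf1 : Differentiable ℝ f) (hf2 : Differentiable ℝ (deriv f))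
    (hc : Continuous (deriv (deriv f))) {x δ : ℝ} (hδ : 0 < δ)
    (h0 : deriv f x = 0) (h2 : deriv (deriv f) x < 0) :
    ∃ y ∈ Ioo (x - δ) x, f y < f x := by
  have hev : ∀ᶠ y in nhds x, deriv (deriv f) y < 0 :=
    hc.continuousAt.eventually_mem (isOpen_Iio.mem_nhds h2)
  obtain ⟨ε, hε, hball⟩ := Metric.eventually_nhds_iff.mp hev
  set c := min ε δ with hc'
  have hcpos : 0 < c := lt_min hε hδ
  have hmono : StrictAntiOn (deriv f) (Icc (x - c/2) x) := by
    apply strictAntiOn_of_deriv_neg (convex_Icc _ _) hf2.continuous.continuousOn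
    intro z hz
    rw [interior_Icc] at hz
    apply hball
    rw [Real.dist_eq, abs_lt]
    constructor <;> [skip; skip] <;>
      nlinarith [hz.1, hz.2, min_le_left ε δ, min_le_right ε δ]
  have hanti : StrictMonoOn f (Icc (x - c/2) x) := by
    apply strictMonoOn_of_deriv_pos (convex_Icc _ _) hf1.continuous.continuousOn
    intro z hz
    rw [interior_Icc] at hz
    have := hmono ⟨le_of_lt hz.1, le_of_lt hz.2⟩ ⟨by linarith, le_rfl⟩ hz.2
    rw [h0] at this
    exact this
  refine ⟨x - c/2, ⟨by nlinarith [min_le_right ε δ], by linarith⟩, ?_⟩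
  exact hanti ⟨le_rfl, by linarith⟩ ⟨by linarith, le_rfl⟩ (by linarith)

set_option maxHeartbeats 4000000 in
theorem stmt_10 (μ σ r : ℝ) (hσ : 0 < σ) (hr : 0 < r) (hμr : r < μ)
    (α : ℝ → ℝ) (hα : ContDiff ℝ 1 α) (hαconv : ConvexOn ℝ (Ici 0) α)
    (hαmono : StrictMonoOn α (Ici 0)) (hα0 : α 0 = 0)
    (hα' : ∀ x ≥ (0:ℝ), r ≤ deriv α x) (hμα : α 1 ≤ μ)
    (b : ℝ) (hb : 1 < b) (w : ℝ → ℝ) (hw : ContDiff ℝ 2 w)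
    (hode : ∀ x ∈ Icc (0:ℝ) b,
      r * w x = (μ - α (max (1 - x) 0)) * deriv w x + σ ^ 2 / 2 * deriv (deriv w) x)
    (hw0 : w 0 = 0) (hw'b : deriv w b = 1) (hw''b : deriv (deriv w) b = 0) :
    ConcaveOn ℝ (Icc 0 b) w := by
  have hσ2 : (0:ℝ) < σ ^ 2 := by positivity
  have hb0 : (0:ℝ) < b := by linarith
  -- differentiability package
  have hw' : ContDiff ℝ 1 (deriv w) := by
    exact (contDiff_succ_iff_deriv.mp (by exact_mod_cast hw : ContDiff ℝ (1 + 1) w)).2.2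
  have hw1 : Differentiable ℝ w := hw.differentiable (by norm_num)
  have hw2 : Differentiable ℝ (deriv w) := hw'.differentiable (by norm_num)
  have hw2c : Continuous (deriv (deriv w)) := by
    exact (contDiff_succ_iff_deriv.mp (by exact_mod_cast hw' :
      ContDiff ℝ (0 + 1) (deriv w))).2.2.continuous
  have hα1 : Differentiable ℝ α := hα.differentiable (by norm_num)
  -- facts about the drift coefficient
  have hmax_mem : ∀ x : ℝ, 0 ≤ x → max (1 - x) 0 ∈ Icc (0:ℝ) 1 :=
    fun x hx => ⟨le_max_right _ _, max_le (by linarith) zero_le_one⟩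
  have hg_nonneg : ∀ x : ℝ, 0 ≤ x → 0 ≤ μ - α (max (1 - x) 0) := by
    intro x hx
    have h1 := (hmax_mem x hx)
    have := hαmono.monotoneOn h1.1 (by norm_num : (1:ℝ) ∈ Ici (0:ℝ)) h1.2
    linarith
  have hg_le : ∀ x : ℝ, 0 ≤ x → μ - α (max (1 - x) 0) ≤ μ := by
    intro x hx
    have := hαmono.monotoneOn (by norm_num : (0:ℝ) ∈ Ici (0:ℝ)) (hmax_mem x hx).1 (le_max_right _ _)
    rw [hα0] at this; linarith
  have hg_pos : ∀ x : ℝ, 0 < x → 0 < μ - α (max (1 - x) 0) := by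
    intro x hx
    have h1 := hmax_mem x hx.le
    have hlt : max (1 - x) 0 < 1 := max_lt (by linarith) one_pos
    have := hαmono h1.1 (by norm_num : (1:ℝ) ∈ Ici (0:ℝ)) hlt
    linarith
  -- w'' formula
  have hw2fun : ∀ x ∈ Icc (0:ℝ) b,
      deriv (deriv w) x = 2/σ^2 * (r * w x - (μ - α (max (1 - x) 0)) * deriv w x) := by
    intro x hx
    have := hode x hx
    field_simp
    linarith
  -- value at b
  have hwb : w b = μ / r := by
    have h := hode b ⟨hb0.le, le_rfl⟩
    rw [hw'b, hw''b, max_eq_right (by linarith : 1 - b ≤ (0:ℝ)), hα0] at h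
    field_simp at h ⊢
    linarith
  have hwbpos : 0 < w b := by rw [hwb]; exact div_pos (by linarith) hr
  -- Step A : w ≥ 0 on [0,b]
  have hwnn : ∀ x ∈ Icc (0:ℝ) b, 0 ≤ w x := by
    obtain ⟨x1, hx1, hmin⟩ := isCompact_Icc.exists_isMinOn (nonempty_Icc.mpr hb0.le)
      hw1.continuous.continuousOn
    intro x hx
    refine le_trans ?_ (hmin hx)
    by_contra hneg
    push_neg at hneg
    have hx10 : x1 ≠ 0 := by rintro rfl; rw [hw0] at hneg; exact lt_irrefl 0 hneg
    have hx1b : x1 ≠ b := by rintro rfl; linarith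
    have hx1o : x1 ∈ Ioo (0:ℝ) b :=
      ⟨lt_of_le_of_ne hx1.1 (Ne.symm hx10), lt_of_le_of_ne hx1.2 hx1b⟩
    have hloc : IsLocalMin w x1 := hmin.isLocalMin (Icc_mem_nhds hx1o.1 hx1o.2)
    have hd0 : deriv w x1 = 0 := hloc.hasDerivAt_eq_zero (hw1 x1).hasDerivAt
    have h2 : deriv (deriv w) x1 < 0 := by
      rw [hw2fun x1 hx1, hd0, mul_zero, sub_zero]
      exact mul_neg_of_pos_of_neg (by positivity) (mul_neg_of_pos_of_neg hr hneg)
    obtain ⟨y, hy, hlt⟩ := push_down w hw1 hw2 hw2c hx1o.1 hd0 h2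
    have hymem : y ∈ Icc (0:ℝ) b := ⟨by linarith [hy.1], by linarith [hy.2, hx1.2]⟩
    exact absurd (hmin hymem) (not_le.mpr hlt)
  -- Step C : w' > 0 on [0,b]
  have hw'pos : ∀ x ∈ Icc (0:ℝ) b, 0 < deriv w x := by
    by_contra hcon
    push_neg at hcon
    obtain ⟨xx, hxx, hxle⟩ := hcon
    set S : Set ℝ := Icc 0 b ∩ deriv w ⁻¹' Iic 0 with hS
    have hSne : S.Nonempty := ⟨xx, hxx, hxle⟩
    have hSbdd : BddAbove S := ⟨b, fun y hy => hy.1.2⟩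
    have hSclosed : IsClosed S := isClosed_Icc.inter (isClosed_Iic.preimage hw2.continuous)
    set x0 := sSup S with hx0def
    have hx0S : x0 ∈ S := hSclosed.csSup_mem hSne hSbdd
    have hx0Icc : x0 ∈ Icc (0:ℝ) b := hx0S.1
    have hx0b : x0 < b := by
      rcases lt_or_eq_of_le hx0Icc.2 with h | h
      · exact h
      · exfalso
        have h2 := hx0S.2
        simp only [mem_preimage, mem_Iic, h, hw'b] at h2
        linarith
    have hgt : ∀ y, x0 < y → y ≤ b → 0 < deriv w y := by
      intro y h1 h2
      by_contra hle'
      push_neg at hle'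
      have hymem : y ∈ S := ⟨⟨by linarith [hx0Icc.1], h2⟩, hle'⟩
      exact absurd (le_csSup hSbdd hymem) (not_le.mpr h1)
    have hd0 : deriv w x0 = 0 := by
      refine le_antisymm hx0S.2 ?_
      have tend : Filter.Tendsto (deriv w) (nhdsWithin x0 (Ioi x0)) (nhds (deriv w x0)) :=
        (hw2.continuous.tendsto x0).mono_left nhdsWithin_le_nhds
      have ev : ∀ᶠ y in nhdsWithin x0 (Ioi x0), 0 ≤ deriv w y := by
        filter_upwards [Ioc_mem_nhdsGT_of_mem ⟨le_rfl, hx0b⟩] with y hy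
        exact (hgt y hy.1 hy.2).le
      exact ge_of_tendsto tend ev
    have hw0nn : 0 ≤ w x0 := hwnn x0 hx0Icc
    rcases eq_or_lt_of_le hw0nn with heq | hpos
    · -- Gronwall : w ≡ 0 on [x0, b], contradiction with deriv w b = 1
      obtain ⟨K, hK⟩ : ∃ K : ℝ, K = 2/σ^2*(r+μ) + 1 := ⟨_, rfl⟩
      have hf'der : ∀ t ∈ Ico x0 b, HasDerivWithinAt (fun t => (w t, deriv w t))
          ((deriv w t, deriv (deriv w) t)) (Ici t) t := fun t _ =>
        (HasDerivAt.prodMk ((hw1 t).hasDerivAt) ((hw2 t).hasDerivAt)).hasDerivWithinAt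
      have hbound : ∀ t ∈ Ico x0 b,
          ‖(deriv w t, deriv (deriv w) t)‖ ≤ K * ‖(w t, deriv w t)‖ + 0 := by
        intro t ht
        have ht' : t ∈ Icc (0:ℝ) b := ⟨le_trans hx0Icc.1 ht.1, ht.2.le⟩
        rw [Prod.norm_def, Prod.norm_def, add_zero]
        simp only [Real.norm_eq_abs]
        obtain ⟨N, hN⟩ : ∃ N : ℝ, N = max |w t| |deriv w t| := ⟨_, rfl⟩
        rw [← hN]
        have h1 : |w t| ≤ N := hN ▸ le_max_left _ _
        have h2 : |deriv w t| ≤ N := hN ▸ le_max_right _ _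
        have hN0 : 0 ≤ N := le_trans (abs_nonneg _) h1
        have hμ0 : (0:ℝ) < μ := lt_trans hr hμr
        have habsg : |μ - α (max (1-t) 0)| ≤ μ := by
          rw [abs_le]
          exact ⟨by linarith [hg_nonneg t ht'.1], hg_le t ht'.1⟩
        have h3 : |deriv (deriv w) t| ≤ 2/σ^2 * (r + μ) * N := by
          rw [hw2fun t ht', abs_mul, abs_of_pos (show (0:ℝ) < 2/σ^2 by positivity)]
          have e1 : |r * w t| ≤ r * N := by
            rw [abs_mul, abs_of_pos hr]
            exact mul_le_mul_of_nonneg_left h1 hr.le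
          have e2 : |(μ - α (max (1 - t) 0)) * deriv w t| ≤ μ * N := by
            rw [abs_mul]
            exact mul_le_mul habsg h2 (abs_nonneg _) hμ0.le
          have e3 : |r * w t - (μ - α (max (1 - t) 0)) * deriv w t|
              ≤ |r * w t| + |(μ - α (max (1 - t) 0)) * deriv w t| := abs_sub _ _
          have h2σ : (0:ℝ) ≤ 2/σ^2 := by positivity
          calc 2/σ^2 * |r * w t - (μ - α (max (1 - t) 0)) * deriv w t|
              ≤ 2/σ^2 * (r * N + μ * N) := by
                apply mul_le_mul_of_nonneg_left _ h2σ
                linarith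
            _ = 2/σ^2 * (r + μ) * N := by ring
        have hK1 : 2/σ^2 * (r + μ) * N ≤ K * N := by
          apply mul_le_mul_of_nonneg_right _ hN0
          rw [hK]; linarith
        have hKN : K * N = 2/σ^2*(r+μ)*N + N := by rw [hK]; ring
        apply max_le
        · have := mul_nonneg (show (0:ℝ) ≤ 2/σ^2*(r+μ) by positivity) hN0
          linarith
        · exact le_trans h3 hK1
      have hgron := norm_le_gronwallBound_of_norm_deriv_right_le
        (f := fun t => (w t, deriv w t)) (δ := 0) (ε := 0) (a := x0) (b := b)
        ((hw1.continuous.prodMk hw2.continuous).continuousOn) hf'der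
        (by show ‖(w x0, deriv w x0)‖ ≤ 0
            rw [← heq, hd0]
            simp [Prod.norm_def]) hbound
      have hb' := hgron b ⟨hx0b.le, le_rfl⟩
      rw [gronwallBound_ε0_δ0] at hb'
      have hge : (1:ℝ) ≤ ‖((fun t => (w t, deriv w t)) b)‖ := by
        show (1:ℝ) ≤ ‖(w b, deriv w b)‖
        calc (1:ℝ) = ‖deriv w b‖ := by rw [hw'b, norm_one]
          _ ≤ max ‖(w b, deriv w b).1‖ ‖(w b, deriv w b).2‖ := le_max_right _ _
          _ = ‖(w b, deriv w b)‖ := (Prod.norm_def _).symm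
      linarith
    · have hx0pos : 0 < x0 := by
        rcases eq_or_lt_of_le hx0Icc.1 with h | h
        · exfalso; rw [← h, hw0] at hpos; exact lt_irrefl 0 hpos
        · exact h
      have h2 : 0 < deriv (deriv w) x0 := by
        rw [hw2fun x0 hx0Icc, hd0, mul_zero, sub_zero]
        exact mul_pos (by positivity) (mul_pos hr hpos)
      obtain ⟨y, hy, hvy⟩ := push_up w hw1 hw2 hw2c hx0pos hd0 h2
      obtain ⟨x1, hx1mem, hmax⟩ := isCompact_Icc.exists_isMaxOn
        (nonempty_Icc.mpr hx0Icc.1) hw1.continuous.continuousOn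
      have hymem : y ∈ Icc (0:ℝ) x0 := ⟨by linarith [hy.1], hy.2.le⟩
      have h1lt : w x0 < w x1 := lt_of_lt_of_le hvy (hmax hymem)
      have hx1pos : 0 < x1 := by
        rcases eq_or_lt_of_le hx1mem.1 with h | h
        · exfalso; rw [← h, hw0] at h1lt; linarith
        · exact h
      have hx1lt : x1 < x0 := lt_of_le_of_ne hx1mem.2 (by rintro rfl; exact lt_irrefl _ h1lt)
      have hloc : IsLocalMax w x1 := hmax.isLocalMax (Icc_mem_nhds hx1pos hx1lt)
      have hd1 : deriv w x1 = 0 := hloc.hasDerivAt_eq_zero (hw1 x1).hasDerivAt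
      have hx1Icc : x1 ∈ Icc (0:ℝ) b := ⟨hx1mem.1, by linarith [hx0Icc.2]⟩
      have h2' : 0 < deriv (deriv w) x1 := by
        rw [hw2fun x1 hx1Icc, hd1, mul_zero, sub_zero]
        exact mul_pos (by positivity) (mul_pos hr (by linarith))
      obtain ⟨y', hy', hlt'⟩ := push_up w hw1 hw2 hw2c hx1pos hd1 h2'
      have hy'mem : y' ∈ Icc (0:ℝ) x0 := ⟨by linarith [hy'.1], by linarith [hy'.2]⟩
      exact absurd (hmax hy'mem) (not_le.mpr hlt')
  -- Step D : w'' ≤ 0 on [1,b]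
  have hμ0 : (0:ℝ) < μ := lt_trans hr hμr
  obtain ⟨d0, hd0sq, hd0pos⟩ : ∃ d0 : ℝ, d0^2 = μ^2 + 2*σ^2*r ∧ μ < d0 := by
    refine ⟨Real.sqrt (μ^2 + 2*σ^2*r), Real.sq_sqrt (by positivity), ?_⟩
    exact (Real.lt_sqrt (by positivity)).mpr (by nlinarith)
  obtain ⟨p, hp⟩ : ∃ p : ℝ, p = (-μ + d0)/σ^2 := ⟨_, rfl⟩
  obtain ⟨q, hq⟩ : ∃ q : ℝ, q = (-μ - d0)/σ^2 := ⟨_, rfl⟩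
  have hppos : 0 < p := by rw [hp]; apply div_pos (by linarith) hσ2
  have hqneg : q < 0 := by
    rw [hq]; apply div_neg_of_neg_of_pos (by linarith) hσ2
  have hsum : p + q = -(2*μ)/σ^2 := by rw [hp, hq]; field_simp; ring
  have hprod : p * q = -(2*r)/σ^2 := by
    rw [hp, hq, div_mul_div_comm, show (-μ + d0) * (-μ - d0) = -(2*σ^2*r) by nlinarith [hd0sq]]
    field_simp
  have hpqneg : p * q < 0 := by rw [hprod]; apply div_neg_of_neg_of_pos (by linarith) hσ2
  -- the second derivative identity on [1,b]
  have hF2eq : ∀ y ∈ Icc (1:ℝ) b, deriv (deriv w) y = 2/σ^2 * (r * w y - μ * deriv w y) := by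
    intro y hy
    rw [hw2fun y ⟨by linarith [hy.1], hy.2⟩,
      max_eq_right (by linarith [hy.1] : 1 - y ≤ (0:ℝ)), hα0, sub_zero]
  have hF2d : ∀ x : ℝ, HasDerivAt (fun y => 2/σ^2 * (r * w y - μ * deriv w y))
      (2/σ^2 * (r * deriv w x - μ * deriv (deriv w) x)) x := fun x =>
    ((((hw1 x).hasDerivAt.const_mul r).sub ((hw2 x).hasDerivAt.const_mul μ)).const_mul (2/σ^2))
  have hW3 : ∀ x ∈ Ico (1:ℝ) b, HasDerivWithinAt (deriv (deriv w))
      (2/σ^2 * (r * deriv w x - μ * deriv (deriv w) x)) (Ici x) x := by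
    intro x hx
    have h1 : HasDerivWithinAt (fun y => 2/σ^2 * (r * w y - μ * deriv w y))
        (2/σ^2 * (r * deriv w x - μ * deriv (deriv w) x)) (Icc 1 b) x :=
      (hF2d x).hasDerivWithinAt
    have h2 : HasDerivWithinAt (deriv (deriv w))
        (2/σ^2 * (r * deriv w x - μ * deriv (deriv w) x)) (Icc 1 b) x :=
      h1.congr (fun y hy => hF2eq y hy) (hF2eq x ⟨hx.1, hx.2.le⟩)
    exact HasDerivWithinAt.mono_of_mem_nhdsWithin h2 (Icc_mem_nhdsGE_of_mem hx)
  -- first order factorization : for roots a, c the function (w'' - a w') e^{-cx} is constant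
  have key : ∀ a c : ℝ, a + c = -(2*μ)/σ^2 → a * c = -(2*r)/σ^2 →
      ∀ x ∈ Icc (1:ℝ) b, (deriv (deriv w) x - a * deriv w x) * Real.exp (-c * x)
        = (deriv (deriv w) 1 - a * deriv w 1) * Real.exp (-c * 1) := by
    intro a c hac hacp
    apply constant_of_has_deriv_right_zero
    · exact ((hw2c.sub (continuous_const.mul hw2.continuous)).mul
        (Real.continuous_exp.comp (continuous_const.mul continuous_id))).continuousOn
    · intro x hx
      have hd2 := hW3 x hx
      have hexp : HasDerivAt (fun y : ℝ => Real.exp (-c * y)) (Real.exp (-c * x) * -c) x := by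
        simpa using ((hasDerivAt_id x).const_mul (-c)).exp
      have hmul := (hd2.sub (((hw2 x).hasDerivAt.const_mul a).hasDerivWithinAt
          (s := Ici x))).mul (hexp.hasDerivWithinAt (s := Ici x))
      refine hmul.congr_deriv ?_
      simp only [Pi.sub_apply]
      linear_combination (Real.exp (-c * x) * deriv w x) * hacp
        - (Real.exp (-c * x) * deriv (deriv w) x) * hac
  have hD : ∀ x ∈ Icc (1:ℝ) b, deriv (deriv w) x ≤ 0 := by
    intro x hx
    have hmemb : b ∈ Icc (1:ℝ) b := ⟨hb.le, le_rfl⟩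
    have EA := (key q p (by linarith) (by rw [mul_comm]; exact hprod) x hx).trans
      (key q p (by linarith) (by rw [mul_comm]; exact hprod) b hmemb).symm
    have EB := (key p q hsum hprod x hx).trans (key p q hsum hprod b hmemb).symm
    rw [hw''b, hw'b] at EA EB
    have hA1 : deriv (deriv w) x - q * deriv w x ≤ -q := by
      have h1 : Real.exp (-p*b) ≤ Real.exp (-p*x) :=
        Real.exp_le_exp.mpr (by nlinarith [hx.2])
      have step : (deriv (deriv w) x - q * deriv w x) * Real.exp (-p*x)
          ≤ -q * Real.exp (-p*x) :=
        calc (deriv (deriv w) x - q * deriv w x) * Real.exp (-p*x)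
            = (0 - q*1) * Real.exp (-p*b) := EA
          _ = -q * Real.exp (-p*b) := by ring
          _ ≤ -q * Real.exp (-p*x) :=
            mul_le_mul_of_nonneg_left h1 (neg_nonneg.mpr hqneg.le)
      exact le_of_mul_le_mul_right step (Real.exp_pos _)
    have hB1 : deriv (deriv w) x - p * deriv w x ≤ -p := by
      have h2 : Real.exp (-q*x) ≤ Real.exp (-q*b) :=
        Real.exp_le_exp.mpr (by nlinarith [hx.2])
      have step : (deriv (deriv w) x - p * deriv w x) * Real.exp (-q*x)
          ≤ -p * Real.exp (-q*x) :=
        calc (deriv (deriv w) x - p * deriv w x) * Real.exp (-q*x)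
            = (0 - p*1) * Real.exp (-q*b) := EB
          _ = -p * Real.exp (-q*b) := by ring
          _ ≤ -p * Real.exp (-q*x) :=
            mul_le_mul_of_nonpos_left h2 (neg_nonpos.mpr hppos.le)
      exact le_of_mul_le_mul_right step (Real.exp_pos _)
    have c1 : p * (deriv (deriv w) x - q * deriv w x) ≤ p * -q :=
      mul_le_mul_of_nonneg_left hA1 hppos.le
    have c2 : -q * (deriv (deriv w) x - p * deriv w x) ≤ -q * -p :=
      mul_le_mul_of_nonneg_left hB1 (neg_nonneg.mpr hqneg.le)
    have c3 : (p - q) * deriv (deriv w) x ≤ (p - q) * 0 := by nlinarith [c1, c2]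
    exact le_of_mul_le_mul_left c3 (by linarith)
  -- Step E : w'' ≤ 0 on [0,1]
  have hE : ∀ x ∈ Icc (0:ℝ) 1, deriv (deriv w) x ≤ 0 := by
    obtain ⟨x0, hx0m, hmax⟩ := isCompact_Icc.exists_isMaxOn
      (nonempty_Icc.mpr zero_le_one) hw2c.continuousOn
    intro x hx
    refine le_trans (hmax hx) ?_
    by_contra hpos0
    push_neg at hpos0
    rcases eq_or_lt_of_le hx0m.2 with h1 | hlt1
    · rw [h1] at hpos0
      linarith [hD 1 ⟨le_rfl, hb.le⟩]
    rcases eq_or_lt_of_le hx0m.1 with h0 | hgt0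
    · have hf0 := hw2fun 0 ⟨le_rfl, hb0.le⟩
      rw [hw0] at hf0
      have hg0 := hg_nonneg 0 le_rfl
      have hw'0 := hw'pos 0 ⟨le_rfl, hb0.le⟩
      have hle0 : deriv (deriv w) 0 ≤ 0 := by
        rw [hf0]
        apply mul_nonpos_of_nonneg_of_nonpos (by positivity)
        nlinarith [mul_nonneg hg0 hw'0.le]
      rw [← h0] at hpos0
      linarith
    · have hx0Ioo : x0 ∈ Ioo (0:ℝ) 1 := ⟨hgt0, hlt1⟩
      have hev : deriv (deriv w) =ᶠ[nhds x0]
          fun y => 2/σ^2 * (r * w y - (μ - α (1-y)) * deriv w y) := by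
        filter_upwards [Ioo_mem_nhds hx0Ioo.1 hx0Ioo.2] with y hy
        rw [hw2fun y ⟨hy.1.le, by linarith [hy.2]⟩,
          max_eq_left (by linarith [hy.2] : (0:ℝ) ≤ 1 - y)]
      have hαd : HasDerivAt (fun y => α (1 - y)) (deriv α (1-x0) * -1) x0 := by
        have houter : HasDerivAt α (deriv α (1-x0)) (1-x0) := (hα1 (1-x0)).hasDerivAt
        have hinner : HasDerivAt (fun y : ℝ => 1 - y) (-1) x0 := by
          simpa using (hasDerivAt_id x0).const_sub 1
        exact houter.comp x0 hinner
      have hcoef : HasDerivAt (fun y => (μ - α (1 - y)) * deriv w y)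
          ((0 - deriv α (1-x0) * -1) * deriv w x0
            + (μ - α (1-x0)) * deriv (deriv w) x0) x0 :=
        ((hasDerivAt_const x0 μ).sub hαd).mul (hw2 x0).hasDerivAt
      have hW3a : HasDerivAt (deriv (deriv w))
          (2/σ^2 * (r * deriv w x0 - ((0 - deriv α (1-x0) * -1) * deriv w x0
            + (μ - α (1-x0)) * deriv (deriv w) x0))) x0 :=
        ((((hw1 x0).hasDerivAt.const_mul r).sub hcoef).const_mul
          (2/σ^2)).congr_of_eventuallyEq hev
      have hloc : IsLocalMax (deriv (deriv w)) x0 :=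
        hmax.isLocalMax (Icc_mem_nhds hgt0 hlt1)
      have hzero := hloc.hasDerivAt_eq_zero hW3a
      have hα'r : r ≤ deriv α (1-x0) := hα' _ (by linarith [hx0Ioo.2])
      have hw'p : 0 < deriv w x0 := hw'pos x0 ⟨hx0m.1, by linarith [hx0Ioo.2]⟩
      have hgp : 0 < μ - α (1-x0) := by
        have h := hg_pos x0 hgt0
        rwa [max_eq_left (by linarith [hx0Ioo.2] : (0:ℝ) ≤ 1 - x0)] at h
      have hkey : r * deriv w x0 - ((0 - deriv α (1-x0) * -1) * deriv w x0
          + (μ - α (1-x0)) * deriv (deriv w) x0) = 0 :=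
        (mul_eq_zero.mp hzero).resolve_left (by positivity : (0:ℝ) < 2/σ^2).ne'
      nlinarith [mul_pos hgp hpos0, mul_nonneg (sub_nonneg.mpr hα'r) hw'p.le]
  -- conclusion
  apply concaveOn_of_deriv2_nonpos (convex_Icc 0 b) hw1.continuous.continuousOn
    hw1.differentiableOn hw2.differentiableOn
  intro x hx
  rw [interior_Icc] at hx
  have : deriv^[2] w x = deriv (deriv w) x := by
    simp [Function.iterate_succ, Function.iterate_zero, Function.comp]
  rw [this]
  rcases le_total x 1 with h1 | h1
  · exact hE x ⟨hx.1.le, h1⟩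
  · exact hD x ⟨h1, hx.2.le⟩
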